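/- Let A be an n-by-n reciprocal matrix whose Perron vector is the all-ones vector (i.e., A has constant row sums). If the principal submatrix A(n), obtained by deleting the last row and column, is not well-behaved, then the all-ones vector is inefficient for A; moreover, every off-diagonal entry in the last column of A is strictly less than 1 (vertex n is a sink of G(A, e_n)). -/
import Mathlib


open Matrix BigOperators Finset

/-- A positive square matrix is reciprocal if `A j i = 1 / A i j` for all `i, j`. -/
def IsReciprocal {n : ℕ} (A : Matrix (Fin n) (Fin n) ℝ) : Prop :=
  (∀ i j, 0 < A i j) ∧ ∀ i j, A j i = 1 / A i j

/-- A reciprocal matrix is consistent if `A i j * A j k = A i k` for all `i, j, k`. -/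
def IsConsistent {n : ℕ} (A : Matrix (Fin n) (Fin n) ℝ) : Prop :=
  IsReciprocal A ∧ ∀ i j k, A i j * A j k = A i k

/-- A vector is positive if all its entries are positive. -/
def PosVec {n : ℕ} (w : Fin n → ℝ) : Prop := ∀ i, 0 < w i

/-- A positive vector `w` is efficient for `A` if any positive vector `v` whose associated
consistent matrix approximates `A` at least as well as that of `w` (entrywise) is a positive
multiple of `w`. -/
def IsEfficient {n : ℕ} (A : Matrix (Fin n) (Fin n) ℝ) (w : Fin n → ℝ) : Prop :=
  PosVec w ∧ ∀ v : Fin n → ℝ, PosVec v →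
    (∀ i j, |A i j - v i / v j| ≤ |A i j - w i / w j|) →
    ∃ c : ℝ, 0 < c ∧ v = c • w

/-- The `i`-th row sum of a matrix. -/
noncomputable def rowSum {n : ℕ} (A : Matrix (Fin n) (Fin n) ℝ) (i : Fin n) : ℝ := ∑ j, A i j

/-- Given the row sums `r` in nonincreasing order (`r 0` the largest), the auxiliary function
`f(x) = 1/x + ∑_{i=2}^{k} 1/(r₁ - rᵢ + x) + 1 - r₁ - x` (note the `i = 1` term of the sum is
`1/x` since `r 0 - r 0 = 0`). -/
noncomputable def auxF {k : ℕ} (r : Fin (k + 1) → ℝ) (x : ℝ) : ℝ :=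
  (∑ i, 1 / (r 0 - r i + x)) + 1 - r 0 - x

/-- A reciprocal matrix `B` is well-behaved if, with row sums `r₁ ≥ ⋯ ≥ r_k`, either
`r₁ - r_k ≥ 1` (type I), or `r₁ - r_k < 1` and `f(1 + r_k - r₁) ≥ 0` (type II). -/
def WellBehaved {k : ℕ} (B : Matrix (Fin (k + 1)) (Fin (k + 1)) ℝ) : Prop :=
  ∃ σ : Equiv.Perm (Fin (k + 1)), Antitone (rowSum B ∘ σ) ∧
    (1 ≤ rowSum B (σ 0) - rowSum B (σ (Fin.last k)) ∨
      (rowSum B (σ 0) - rowSum B (σ (Fin.last k)) < 1 ∧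
        0 ≤ auxF (rowSum B ∘ σ) (1 + rowSum B (σ (Fin.last k)) - rowSum B (σ 0))))

/-- If a reciprocal matrix `A` has constant row sums (Perron vector the all-ones vector) and
its last principal submatrix `A(n)` is not well-behaved, then the all-ones vector is
inefficient for `A` and every off-diagonal entry of the last column of `A` is less than `1`
(vertex `n` is a sink of `G(A, e_n)`). -/
theorem stmt16 {n : ℕ} (A : Matrix (Fin (n + 2)) (Fin (n + 2)) ℝ) (hA : IsReciprocal A)
    (hconst : ∃ c : ℝ, ∀ i, rowSum A i = c)
    (hwb : ¬ WellBehaved (A.submatrix Fin.castSucc Fin.castSucc)) :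
    ¬ IsEfficient A (fun _ => 1) ∧
    ∀ i : Fin (n + 1), A i.castSucc (Fin.last (n + 1)) < 1 := by
  obtain ⟨hpos, hrec⟩ := hA
  obtain ⟨c, hc⟩ := hconst
  set B := A.submatrix (Fin.castSucc (n := n + 1)) Fin.castSucc with hB
  set a : Fin (n + 1) → ℝ := fun i => A i.castSucc (Fin.last (n + 1)) with ha
  have hapos : ∀ i, 0 < a i := fun i => hpos _ _
  have hdiag : ∀ i, A i i = 1 := by
    intro i
    have h := hrec i i
    have hp := hpos i i
    have h2 : A i i * A i i = 1 := by
      field_simp at h; linarith [h]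
    have h3 : (A i i - 1) * (A i i + 1) = 0 := by nlinarith
    rcases mul_eq_zero.mp h3 with h4 | h4 <;> linarith
  have hg : ∀ i : Fin (n + 1), rowSum B i = c - a i := by
    intro i
    have h1 : rowSum A i.castSucc = (∑ j : Fin (n + 1), A i.castSucc j.castSucc) + a i := by
      rw [rowSum, Fin.sum_univ_castSucc]
    have h2 := hc i.castSucc
    have h3 : rowSum B i = ∑ j : Fin (n + 1), A i.castSucc j.castSucc := by
      simp [rowSum, hB, Matrix.submatrix_apply]
    linarith
  have hcval : c = (∑ j : Fin (n + 1), 1 / a j) + 1 := by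
    have h2 := hc (Fin.last (n + 1))
    rw [rowSum, Fin.sum_univ_castSucc, hdiag] at h2
    have h3 : ∀ j ∈ Finset.univ, A (Fin.last (n + 1)) (Fin.castSucc j) = 1 / a j :=
      fun j _ => hrec j.castSucc (Fin.last (n + 1))
    rw [Finset.sum_congr rfl h3] at h2
    linarith
  set σ : Equiv.Perm (Fin (n + 1)) := (Fin.revPerm).trans (Tuple.sort (rowSum B)) with hσ
  have hanti : Antitone (rowSum B ∘ σ) := by
    intro x y hxy
    exact Tuple.monotone_sort (rowSum B) (Fin.rev_le_rev.mpr hxy)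
  have hσ0 : σ 0 = Tuple.sort (rowSum B) (Fin.last n) := by
    simp [hσ, Fin.rev_zero]
  have hσl : σ (Fin.last n) = Tuple.sort (rowSum B) 0 := by
    simp [hσ, Fin.rev_last]
  have hmin : ∀ i, a (σ 0) ≤ a i := by
    intro i
    obtain ⟨j, hj⟩ := σ.surjective i
    have h1 : rowSum B (σ j) ≤ rowSum B (σ 0) := hanti (Fin.zero_le j)
    rw [hj, hg, hg] at h1
    linarith
  have hmax : ∀ i, a i ≤ a (σ (Fin.last n)) := by
    intro i
    obtain ⟨j, hj⟩ := σ.surjective i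
    have h1 : rowSum B (σ (Fin.last n)) ≤ rowSum B (σ j) := hanti (Fin.le_last j)
    rw [hj, hg, hg] at h1
    linarith
  set Mx := a (σ (Fin.last n)) with hMx
  set m := a (σ 0) with hm
  have part2 : ∀ i : Fin (n + 1), A i.castSucc (Fin.last (n + 1)) < 1 := by
    by_contra hcon
    push_neg at hcon
    obtain ⟨i₀, hi₀⟩ := hcon
    have hM1 : 1 ≤ Mx := le_trans hi₀ (hmax i₀)
    apply hwb
    refine ⟨σ, hanti, ?_⟩
    rw [hg (σ 0), hg (σ (Fin.last n))]
    by_cases h1 : 1 ≤ Mx - m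
    · left; linarith
    · push_neg at h1
      right
      refine ⟨by linarith, ?_⟩
      set X := 1 + (c - Mx) - (c - m) with hX
      have hXpos : 0 < X := by rw [hX]; linarith
      unfold auxF
      have hr0 : (rowSum B ∘ σ) 0 = c - m := by
        simp only [Function.comp_apply]; rw [hg, hm]
      have hsum : (∑ i, 1 / ((rowSum B ∘ σ) 0 - (rowSum B ∘ σ) i + X))
          = ∑ i, 1 / (1 + a i - Mx) := by
        have step : ∀ i ∈ Finset.univ, 1 / ((rowSum B ∘ σ) 0 - (rowSum B ∘ σ) i + X)
            = (fun j => 1 / ((c - m) - rowSum B j + X)) (σ i) := by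
          intro i _
          simp only [Function.comp_apply]
          rw [hg (σ 0), ← hm]
        rw [Finset.sum_congr rfl step,
          Equiv.sum_comp σ (fun j => 1 / ((c - m) - rowSum B j + X))]
        apply Finset.sum_congr rfl
        intro i _
        rw [hg]
        congr 1
        rw [hX]; ring
      rw [hsum, hr0]
      have hterm : ∀ i ∈ Finset.univ, (1 : ℝ) / a i ≤ 1 / (1 + a i - Mx) := by
        intro i _
        apply one_div_le_one_div_of_le
        · have := hmin i; rw [hX] at hXpos; linarith
        · linarith
      have hsle : (∑ j : Fin (n + 1), 1 / a j) ≤ ∑ i, 1 / (1 + a i - Mx) :=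
        Finset.sum_le_sum hterm
      rw [hX]
      linarith
  refine ⟨?_, part2⟩
  rintro ⟨-, heff⟩
  have hMlt : Mx < 1 := part2 _
  have hM0 : 0 < Mx := hapos _
  obtain ⟨s, hsM, hs1⟩ : ∃ s : ℝ, Mx < s ∧ s < 1 := ⟨(Mx + 1) / 2, by linarith, by linarith⟩
  have hs0 : 0 < s := lt_trans hM0 hsM
  set v : Fin (n + 2) → ℝ := fun j => if j = Fin.last (n + 1) then 1 / s else 1 with hv
  have hvpos : PosVec v := by
    intro j
    simp only [hv]
    split
    · positivity
    · norm_num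
  have hvcast : ∀ i : Fin (n + 1), v i.castSucc = 1 := by
    intro i
    simp only [hv]
    rw [if_neg (Fin.ne_of_lt (Fin.castSucc_lt_last i))]
  have hvlast : v (Fin.last (n + 1)) = 1 / s := by simp [hv]
  have hcond : ∀ i j, |A i j - v i / v j| ≤ |A i j - (fun _ => (1:ℝ)) i / (fun _ => (1:ℝ)) j| := by
    intro i j
    simp only [div_one]
    rcases Fin.eq_castSucc_or_eq_last i with ⟨i', rfl⟩ | rfl <;>
      rcases Fin.eq_castSucc_or_eq_last j with ⟨j', rfl⟩ | rfl
    · rw [hvcast, hvcast, div_one]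
    · rw [hvcast, hvlast, one_div_one_div]
      have h1 : A i'.castSucc (Fin.last (n + 1)) ≤ Mx := hmax i'
      rw [abs_of_nonpos (by linarith), abs_of_nonpos (by linarith)]
      linarith
    · rw [hvcast, hvlast, div_one]
      have hja : (0 : ℝ) < A j'.castSucc (Fin.last (n + 1)) := hpos _ _
      have h1 : A j'.castSucc (Fin.last (n + 1)) ≤ Mx := hmax j'
      have h2 : A (Fin.last (n + 1)) j'.castSucc = 1 / A j'.castSucc (Fin.last (n + 1)) :=
        hrec j'.castSucc (Fin.last (n + 1))
      have h3 : 1 / s ≤ 1 / A j'.castSucc (Fin.last (n + 1)) :=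
        one_div_le_one_div_of_le hja (by linarith)
      have h4 : 1 ≤ 1 / s := by rw [le_div_iff₀ hs0]; linarith
      have h5 : (1 : ℝ) ≤ 1 / A j'.castSucc (Fin.last (n + 1)) := by
        rw [le_div_iff₀ hja]; linarith
      rw [h2, abs_of_nonneg (by linarith), abs_of_nonneg (by linarith)]
      linarith
    · rw [hvlast, div_self (by positivity)]
  obtain ⟨c', hc'pos, hvc⟩ := heff v hvpos hcond
  have e0 := congrFun hvc (Fin.castSucc 0)
  have el := congrFun hvc (Fin.last (n + 1))
  rw [hvcast 0] at e0
  rw [hvlast] at el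
  simp only [Pi.smul_apply, smul_eq_mul, mul_one] at e0 el
  have : 1 / s = 1 := by rw [el, ← e0]
  rw [div_eq_one_iff_eq (ne_of_gt hs0)] at this
  linarith
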